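/- Let $\{X_k, \mathcal{F}_k\}_{k=0}^n$ be a real-valued martingale, $m \ge 2$ an even integer, and suppose that almost surely $|X_k - X_{k-1}| \le d$ and $|\mathbb{E}[(X_k - X_{k-1})^l \mid \mathcal{F}_{k-1}]| \le \mu_l$ for $l = 2,\dots,m$ and all $k$, where $d > 0$ and $\mu_l \ge 0$. Let $\delta = \alpha/d$ and $\gamma_l = \mu_l/d^l$. Then for every $\alpha \ge 0$ and every $x \ge 0$, $\Pr(|X_n - X_0| \ge n\alpha) \le 2\left\{ e^{-\delta x}\left[1 + \sum_{l=2}^{m-1} \frac{(\gamma_l - \gamma_m)x^l}{l!} + \gamma_m(e^x - 1 - x)\right] \right\}^n$. -/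

import Mathlib

open MeasureTheory

set_option maxHeartbeats 2000000

lemma aux_exp_tsum (y : ℝ) : Real.exp y = ∑' n : ℕ, y ^ n / n.factorial := by
  rw [Real.exp_eq_exp_ℝ, NormedSpace.exp_eq_tsum_div]

lemma aux_tail (m : ℕ) (y : ℝ) :
    ∑' l : ℕ, y ^ (l + m) / (l + m).factorial
      = Real.exp y - ∑ l ∈ Finset.range m, y ^ l / l.factorial := by
  have hs := Real.summable_pow_div_factorial y
  have := hs.sum_add_tsum_nat_add m
  rw [aux_exp_tsum y]
  linarith [this]

lemma aux_ptwise (m : ℕ) (hme : Even m) (d t x : ℝ) (hd : 0 < d) (ht : |t| ≤ d)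
    (hx : 0 ≤ x) :
    Real.exp (x / d * t) ≤ ∑ l ∈ Finset.range m, (x / d * t) ^ l / l.factorial
      + t ^ m / d ^ m * (Real.exp x - ∑ l ∈ Finset.range m, x ^ l / l.factorial) := by
  have hs := Real.summable_pow_div_factorial (x / d * t)
  have hxs := Real.summable_pow_div_factorial x
  have htm : |t| ^ m = t ^ m := hme.pow_abs t
  have htmpos : (0:ℝ) ≤ t ^ m := htm ▸ pow_nonneg (abs_nonneg t) m
  have hsum1 : Summable (fun l : ℕ => (x / d * t) ^ (l + m) / ((l + m).factorial : ℝ)) :=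
    (summable_nat_add_iff m).2 hs
  have hsum2 : Summable (fun l : ℕ => t ^ m / d ^ m * (x ^ (l + m) / ((l + m).factorial : ℝ))) :=
    ((summable_nat_add_iff m).2 hxs).mul_left _
  have hterm : ∀ l : ℕ, (x / d * t) ^ (l + m) / ((l + m).factorial : ℝ)
      ≤ t ^ m / d ^ m * (x ^ (l + m) / ((l + m).factorial : ℝ)) := by
    intro l
    have hfact : (0:ℝ) < (l + m).factorial := by positivity
    have hmain : (x / d * t) ^ (l + m) ≤ t ^ m / d ^ m * x ^ (l + m) := ?_
    · calc (x / d * t) ^ (l + m) / ((l + m).factorial : ℝ)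
          ≤ (t ^ m / d ^ m * x ^ (l + m)) / ((l + m).factorial : ℝ) := by gcongr
        _ = t ^ m / d ^ m * (x ^ (l + m) / ((l + m).factorial : ℝ)) := by ring
    have h1 : (x / d * t) ^ (l + m) ≤ |x / d * t| ^ (l + m) := by
      rw [← abs_pow]; exact le_abs_self _
    refine h1.trans ?_
    rw [abs_mul, mul_pow, abs_of_nonneg (show (0:ℝ) ≤ x / d by positivity), pow_add |t|, htm]
    have h3 : |t| ^ l ≤ d ^ l := pow_le_pow_left₀ (abs_nonneg t) ht l
    calc (x / d) ^ (l + m) * (|t| ^ l * t ^ m)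
        ≤ (x / d) ^ (l + m) * (d ^ l * t ^ m) := by
          apply mul_le_mul_of_nonneg_left (mul_le_mul_of_nonneg_right h3 htmpos) (by positivity)
      _ = t ^ m / d ^ m * x ^ (l + m) := by
          rw [div_pow, pow_add x, pow_add d]
          field_simp
  have hbound := Summable.tsum_le_tsum hterm hsum1 hsum2
  rw [tsum_mul_left, aux_tail m x] at hbound
  rw [aux_exp_tsum (x / d * t), ← hs.sum_add_tsum_nat_add m]
  linarith

lemma aux_split (m : ℕ) (hm : 2 ≤ m) (f : ℕ → ℝ) :
    ∑ l ∈ Finset.range m, f l = f 0 + f 1 + ∑ l ∈ Finset.Icc 2 (m - 1), f l := by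
  have h1 : Finset.Icc 2 (m - 1) = Finset.Ico 2 m := by
    rw [← Finset.Ico_add_one_right_eq_Icc, Nat.sub_add_cancel (le_trans one_le_two hm)]
  rw [h1, Finset.range_eq_Ico, ← Finset.sum_Ico_consecutive _ (Nat.zero_le 2) hm]
  have : Finset.Ico 0 2 = {0, 1} := rfl
  rw [this]
  simp [add_assoc]

lemma aux_int {Ω : Type*} {m0 : MeasurableSpace Ω} {μ : Measure Ω} [IsFiniteMeasure μ]
    {f : Ω → ℝ} {C : ℝ} (hm : AEStronglyMeasurable f μ) (h : ∀ᵐ ω ∂μ, |f ω| ≤ C) :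
    Integrable f μ :=
  ⟨hm, HasFiniteIntegral.of_bounded (C := C) (by simpa [Real.norm_eq_abs] using h)⟩

lemma aux_onesided {Ω : Type*} {m0 : MeasurableSpace Ω} {μ : Measure Ω} [IsProbabilityMeasure μ]
    (ℱ : Filtration ℕ m0) (X : ℕ → Ω → ℝ) (hmart : Martingale X ℱ μ)
    (n : ℕ) (m : ℕ) (hm : 2 ≤ m) (hme : Even m)
    (d : ℝ) (hd : 0 < d) (μl : ℕ → ℝ) (hμl : ∀ l, 2 ≤ l → l ≤ m → 0 ≤ μl l)
    (hjump : ∀ k, 1 ≤ k → k ≤ n → ∀ᵐ ω ∂μ, |X k ω - X (k - 1) ω| ≤ d)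
    (hmom : ∀ k, 1 ≤ k → k ≤ n → ∀ l, 2 ≤ l → l ≤ m →
      ∀ᵐ ω ∂μ, |(μ[fun ω => (X k ω - X (k - 1) ω) ^ l | ℱ (k - 1)]) ω| ≤ μl l)
    (α : ℝ) (hα : 0 ≤ α) (x : ℝ) (hx : 0 ≤ x) :
    (μ {ω | (n : ℝ) * α ≤ X n ω - X 0 ω}).toReal ≤
      (Real.exp (-(α / d) * x) *
        (1 + (∑ l ∈ Finset.Icc 2 (m - 1), (μl l / d ^ l - μl m / d ^ m) * x ^ l / l.factorial)
          + μl m / d ^ m * (Real.exp x - 1 - x))) ^ n := by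
  have hd0 : (0:ℝ) < d ^ m := by positivity
  set S : ℝ := ∑ l ∈ Finset.range m, x ^ l / l.factorial with hS
  set c : ℝ := (Real.exp x - S) / d ^ m with hc
  have hrem : 0 ≤ Real.exp x - S := sub_nonneg.2 (Real.sum_le_exp_of_nonneg hx m)
  have hc0 : 0 ≤ c := by rw [hc]; positivity
  set B : ℝ := 1 + (∑ l ∈ Finset.Icc 2 (m - 1), (x / d) ^ l / l.factorial * μl l) + c * μl m
    with hB
  have hmem : ∀ l ∈ Finset.Icc 2 (m - 1), 2 ≤ l ∧ l ≤ m := by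
    intro l hl
    rw [Finset.mem_Icc] at hl
    exact ⟨hl.1, le_trans hl.2 (Nat.sub_le m 1)⟩
  have hμm : 0 ≤ μl m := hμl m hm le_rfl
  have hB1 : 1 ≤ B := by
    rw [hB]
    have h1 : 0 ≤ ∑ l ∈ Finset.Icc 2 (m - 1), (x / d) ^ l / l.factorial * μl l := by
      apply Finset.sum_nonneg
      intro l hl
      have := hμl l (hmem l hl).1 (hmem l hl).2
      positivity
    nlinarith [mul_nonneg hc0 hμm]
  have hB0 : (0:ℝ) ≤ B := le_trans zero_le_one hB1
  -- the stated bracket equals B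
  have hSsplit : S = 1 + x + ∑ l ∈ Finset.Icc 2 (m - 1), x ^ l / l.factorial := by
    rw [hS, aux_split m hm (fun l => x ^ l / l.factorial)]
    norm_num
  have hBeq : 1 + (∑ l ∈ Finset.Icc 2 (m - 1), (μl l / d ^ l - μl m / d ^ m) * x ^ l / l.factorial)
      + μl m / d ^ m * (Real.exp x - 1 - x) = B := by
    have hsum : ∑ l ∈ Finset.Icc 2 (m - 1), (μl l / d ^ l - μl m / d ^ m) * x ^ l / l.factorial
        = (∑ l ∈ Finset.Icc 2 (m - 1), (x / d) ^ l / l.factorial * μl l)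
          - μl m / d ^ m * (∑ l ∈ Finset.Icc 2 (m - 1), x ^ l / l.factorial) := by
      rw [Finset.mul_sum, ← Finset.sum_sub_distrib]
      apply Finset.sum_congr rfl
      intro l _
      have hdl : (0:ℝ) < d ^ l := by positivity
      rw [div_pow]
      field_simp
    have hIcc : ∑ l ∈ Finset.Icc 2 (m - 1), x ^ l / l.factorial = S - 1 - x := by
      linarith [hSsplit]
    rw [hsum, hIcc, hB, hc]
    field_simp
    ring
  -- conditional mgf bound
  have hXm : ∀ k, AEStronglyMeasurable (X k) μ :=
    fun k => ((hmart.stronglyAdapted k).mono (ℱ.le k)).aestronglyMeasurable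
  have hcond : ∀ k, 1 ≤ k → k ≤ n →
      (μ[fun ω => Real.exp (x / d * (X k ω - X (k - 1) ω)) | ℱ (k - 1)])
        ≤ᵐ[μ] fun _ => B := by
    intro k hk1 hkn
    have hG : ℱ (k - 1) ≤ m0 := ℱ.le (k - 1)
    have hjk := hjump k hk1 hkn
    have hΔmeas : AEStronglyMeasurable (fun ω => X k ω - X (k - 1) ω) μ :=
      (hXm k).sub (hXm (k - 1))
    have hΔint : Integrable (fun ω => X k ω - X (k - 1) ω) μ := aux_int hΔmeas hjk
    have hΔpow : ∀ l : ℕ, Integrable (fun ω => (X k ω - X (k - 1) ω) ^ l) μ := by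
      intro l
      refine aux_int (C := d ^ l) ((hΔmeas.aemeasurable.pow_const l).aestronglyMeasurable) ?_
      filter_upwards [hjk] with ω hω
      rw [abs_pow]
      exact pow_le_pow_left₀ (abs_nonneg _) hω l
    have hEmeas : AEStronglyMeasurable (fun ω => Real.exp (x / d * (X k ω - X (k - 1) ω))) μ :=
      Real.continuous_exp.comp_aestronglyMeasurable (hΔmeas.const_mul (x / d))
    have hEint : Integrable (fun ω => Real.exp (x / d * (X k ω - X (k - 1) ω))) μ := by
      refine aux_int (C := Real.exp (x / d * d)) hEmeas ?_
      filter_upwards [hjk] with ω hω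
      rw [abs_of_pos (Real.exp_pos _)]
      apply Real.exp_le_exp.2
      exact mul_le_mul_of_nonneg_left (abs_le.1 hω).2 (by positivity)
    -- integrability of all pieces of F
    have i1 : Integrable (fun ω => x / d * (X k ω - X (k - 1) ω)) μ := hΔint.const_mul _
    have isum : Integrable
        (fun ω => ∑ l ∈ Finset.Icc 2 (m - 1),
          (x / d) ^ l / l.factorial * (X k ω - X (k - 1) ω) ^ l) μ :=
      integrable_finset_sum _ (fun l _ => (hΔpow l).const_mul _)
    have im : Integrable (fun ω => c * (X k ω - X (k - 1) ω) ^ m) μ := (hΔpow m).const_mul _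
    have iG2 : Integrable (fun ω => 1 + x / d * (X k ω - X (k - 1) ω)) μ := by
      exact (integrable_const 1).add i1
    have iG3 : Integrable (fun ω => 1 + x / d * (X k ω - X (k - 1) ω)
        + ∑ l ∈ Finset.Icc 2 (m - 1),
            (x / d) ^ l / l.factorial * (X k ω - X (k - 1) ω) ^ l) μ := by
      exact iG2.add isum
    have iF : Integrable (fun ω => 1 + x / d * (X k ω - X (k - 1) ω)
        + (∑ l ∈ Finset.Icc 2 (m - 1),
            (x / d) ^ l / l.factorial * (X k ω - X (k - 1) ω) ^ l)
        + c * (X k ω - X (k - 1) ω) ^ m) μ := by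
      exact iG3.add im
    -- pointwise bound exp ≤ F
    have hptF : ∀ᵐ ω ∂μ, Real.exp (x / d * (X k ω - X (k - 1) ω))
        ≤ 1 + x / d * (X k ω - X (k - 1) ω)
          + (∑ l ∈ Finset.Icc 2 (m - 1),
              (x / d) ^ l / l.factorial * (X k ω - X (k - 1) ω) ^ l)
          + c * (X k ω - X (k - 1) ω) ^ m := by
      filter_upwards [hjk] with ω hω
      have hp := aux_ptwise m hme d (X k ω - X (k - 1) ω) x hd hω hx
      rw [aux_split m hm (fun l => (x / d * (X k ω - X (k - 1) ω)) ^ l / l.factorial)] at hp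
      simp only [pow_zero, pow_one, Nat.factorial_zero, Nat.factorial_one, Nat.cast_one,
        div_one] at hp
      have hterm : ∑ l ∈ Finset.Icc 2 (m - 1),
            (x / d * (X k ω - X (k - 1) ω)) ^ l / l.factorial
          = ∑ l ∈ Finset.Icc 2 (m - 1),
            (x / d) ^ l / l.factorial * (X k ω - X (k - 1) ω) ^ l := by
        apply Finset.sum_congr rfl
        intro l _
        rw [mul_pow]
        ring
      have hlast : (X k ω - X (k - 1) ω) ^ m / d ^ m * (Real.exp x - S)
          = c * (X k ω - X (k - 1) ω) ^ m := by rw [hc]; ring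
      rw [hterm, hlast] at hp
      linarith
    -- conditional expectation computation
    have hmono := condExp_mono (m := ℱ (k - 1)) hEint iF hptF
    have a2 : μ[fun ω => 1 + x / d * (X k ω - X (k - 1) ω)
        + (∑ l ∈ Finset.Icc 2 (m - 1),
            (x / d) ^ l / l.factorial * (X k ω - X (k - 1) ω) ^ l)
        + c * (X k ω - X (k - 1) ω) ^ m | ℱ (k - 1)]
        =ᵐ[μ] μ[fun ω => 1 + x / d * (X k ω - X (k - 1) ω)
            + ∑ l ∈ Finset.Icc 2 (m - 1),
              (x / d) ^ l / l.factorial * (X k ω - X (k - 1) ω) ^ l | ℱ (k - 1)]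
          + μ[fun ω => c * (X k ω - X (k - 1) ω) ^ m | ℱ (k - 1)] :=
      condExp_add iG3 im _
    have a3 : μ[fun ω => 1 + x / d * (X k ω - X (k - 1) ω)
        + ∑ l ∈ Finset.Icc 2 (m - 1),
            (x / d) ^ l / l.factorial * (X k ω - X (k - 1) ω) ^ l | ℱ (k - 1)]
        =ᵐ[μ] μ[fun ω => 1 + x / d * (X k ω - X (k - 1) ω) | ℱ (k - 1)]
          + μ[fun ω => ∑ l ∈ Finset.Icc 2 (m - 1),
              (x / d) ^ l / l.factorial * (X k ω - X (k - 1) ω) ^ l | ℱ (k - 1)] :=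
      condExp_add iG2 isum _
    have a4 : μ[fun ω => 1 + x / d * (X k ω - X (k - 1) ω) | ℱ (k - 1)]
        =ᵐ[μ] μ[fun _ : Ω => (1:ℝ) | ℱ (k - 1)]
          + μ[fun ω => x / d * (X k ω - X (k - 1) ω) | ℱ (k - 1)] :=
      condExp_add (integrable_const 1) i1 _
    have a5 : μ[fun _ : Ω => (1:ℝ) | ℱ (k - 1)] = fun _ => (1:ℝ) := condExp_const hG 1
    have a6 : μ[fun ω => x / d * (X k ω - X (k - 1) ω) | ℱ (k - 1)]
        =ᵐ[μ] fun ω => x / d * (μ[fun ω => X k ω - X (k - 1) ω | ℱ (k - 1)]) ω :=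
      condExp_smul (x / d) (fun ω => X k ω - X (k - 1) ω) _
    have a7 : μ[fun ω => X k ω - X (k - 1) ω | ℱ (k - 1)] =ᵐ[μ] fun _ => (0:ℝ) := by
      have hbr : μ[fun ω => X k ω - X (k - 1) ω | ℱ (k - 1)]
          =ᵐ[μ] μ[X k - X (k - 1) | ℱ (k - 1)] :=
        condExp_congr_ae (Filter.Eventually.of_forall fun ω => rfl)
      have hsub : μ[X k - X (k - 1) | ℱ (k - 1)]
          =ᵐ[μ] μ[X k | ℱ (k - 1)] - μ[X (k - 1) | ℱ (k - 1)] :=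
        condExp_sub (hmart.integrable k) (hmart.integrable (k - 1)) _
      have hk' : μ[X k | ℱ (k - 1)] =ᵐ[μ] X (k - 1) := hmart.condExp_ae_eq (Nat.sub_le k 1)
      have hk'' : μ[X (k - 1) | ℱ (k - 1)] = X (k - 1) :=
        condExp_of_stronglyMeasurable hG (hmart.stronglyAdapted (k - 1)) (hmart.integrable (k - 1))
      filter_upwards [hbr, hsub, hk'] with ω e1 e2 e3
      rw [e1, e2, Pi.sub_apply, e3, hk'', sub_self]
    have a8 : μ[fun ω => ∑ l ∈ Finset.Icc 2 (m - 1),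
          (x / d) ^ l / l.factorial * (X k ω - X (k - 1) ω) ^ l | ℱ (k - 1)]
        =ᵐ[μ] ∑ l ∈ Finset.Icc 2 (m - 1),
          μ[fun ω => (x / d) ^ l / l.factorial * (X k ω - X (k - 1) ω) ^ l | ℱ (k - 1)] := by
      have hfs := condExp_finsetSum (μ := μ) (s := Finset.Icc 2 (m - 1))
        (f := fun l ω => (x / d) ^ l / l.factorial * (X k ω - X (k - 1) ω) ^ l)
        (fun l _ => (hΔpow l).const_mul _) (ℱ (k - 1))
      have hpt : (fun ω => ∑ l ∈ Finset.Icc 2 (m - 1),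
            (x / d) ^ l / l.factorial * (X k ω - X (k - 1) ω) ^ l)
          = ∑ l ∈ Finset.Icc 2 (m - 1),
            (fun ω => (x / d) ^ l / l.factorial * (X k ω - X (k - 1) ω) ^ l) := by
        funext ω
        rw [Finset.sum_apply]
      rw [hpt]
      exact hfs
    have a9 : ∀ᵐ ω ∂μ, ∀ l : ℕ,
        (μ[fun ω => (x / d) ^ l / l.factorial * (X k ω - X (k - 1) ω) ^ l | ℱ (k - 1)]) ω
          = (x / d) ^ l / l.factorial
            * (μ[fun ω => (X k ω - X (k - 1) ω) ^ l | ℱ (k - 1)]) ω := by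
      refine ae_all_iff.2 fun l => ?_
      filter_upwards [condExp_smul (μ := μ)
        ((x / d) ^ l / l.factorial : ℝ) (fun ω => (X k ω - X (k - 1) ω) ^ l) (ℱ (k - 1))] with ω hω
      exact hω
    have a10 : ∀ᵐ ω ∂μ, ∀ l : ℕ, 2 ≤ l → l ≤ m →
        (μ[fun ω => (X k ω - X (k - 1) ω) ^ l | ℱ (k - 1)]) ω ≤ μl l := by
      refine ae_all_iff.2 fun l => ?_
      by_cases h2 : 2 ≤ l ∧ l ≤ m
      · filter_upwards [hmom k hk1 hkn l h2.1 h2.2] with ω hω _ _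
        exact (abs_le.1 hω).2
      · filter_upwards with ω hl2 hlm
        exact absurd ⟨hl2, hlm⟩ h2
    have a11 : μ[fun ω => c * (X k ω - X (k - 1) ω) ^ m | ℱ (k - 1)]
        =ᵐ[μ] fun ω => c * (μ[fun ω => (X k ω - X (k - 1) ω) ^ m | ℱ (k - 1)]) ω :=
      condExp_smul c (fun ω => (X k ω - X (k - 1) ω) ^ m) _
    filter_upwards [hmono, a2, a3, a4, a6, a7, a8, a9, a10, a11]
      with ω e1 e2 e3 e4 e6 e7 e8 e9 e10 e11
    refine e1.trans ?_
    rw [e2, Pi.add_apply, e3, Pi.add_apply, e4, Pi.add_apply, a5, e6, e7, e8, e11]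
    simp only [Finset.sum_apply]
    have hsum_le : ∑ l ∈ Finset.Icc 2 (m - 1),
          (μ[fun ω => (x / d) ^ l / l.factorial * (X k ω - X (k - 1) ω) ^ l | ℱ (k - 1)]) ω
        ≤ ∑ l ∈ Finset.Icc 2 (m - 1), (x / d) ^ l / l.factorial * μl l := by
      apply Finset.sum_le_sum
      intro l hl
      rw [e9 l]
      exact mul_le_mul_of_nonneg_left (e10 l (hmem l hl).1 (hmem l hl).2) (by positivity)
    have hm_le : c * (μ[fun ω => (X k ω - X (k - 1) ω) ^ m | ℱ (k - 1)]) ω ≤ c * μl m :=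
      mul_le_mul_of_nonneg_left (e10 m hm le_rfl) hc0
    rw [hB]
    simp only [mul_zero]
    linarith
  -- telescoping a.e. bound on |X k - X 0|
  have htel : ∀ k, k ≤ n → ∀ᵐ ω ∂μ, |X k ω - X 0 ω| ≤ k * d := by
    intro k
    induction k with
    | zero =>
      intro _
      filter_upwards with ω
      simp
    | succ k ih =>
      intro hk
      have hkn : k ≤ n := le_trans (Nat.le_succ k) hk
      filter_upwards [ih hkn, hjump (k + 1) (Nat.succ_le_succ (Nat.zero_le k)) hk] with ω h1 h2
      have hsplit : X (k + 1) ω - X 0 ω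
          = (X (k + 1) ω - X (k + 1 - 1) ω) + (X k ω - X 0 ω) := by
        simp only [Nat.add_sub_cancel]
        ring
      calc |X (k + 1) ω - X 0 ω|
          ≤ |X (k + 1) ω - X (k + 1 - 1) ω| + |X k ω - X 0 ω| := by
            rw [hsplit]; exact abs_add_le _ _
        _ ≤ d + k * d := add_le_add h2 h1
        _ = (k + 1 : ℕ) * d := by push_cast; ring
  -- integrability of exp(x/d * (X k - X 0)) for k ≤ n
  have hPmeas : ∀ k : ℕ, AEStronglyMeasurable (fun ω => Real.exp (x / d * (X k ω - X 0 ω))) μ :=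
    fun k => Real.continuous_exp.comp_aestronglyMeasurable
      (((hXm k).sub (hXm 0)).const_mul (x / d))
  have hPint : ∀ k, k ≤ n → Integrable (fun ω => Real.exp (x / d * (X k ω - X 0 ω))) μ := by
    intro k hk
    refine aux_int (C := Real.exp (x / d * (k * d))) (hPmeas k) ?_
    filter_upwards [htel k hk] with ω hω
    rw [abs_of_pos (Real.exp_pos _)]
    exact Real.exp_le_exp.2 (mul_le_mul_of_nonneg_left (abs_le.1 hω).2 (by positivity))
  -- induction: ∫ exp(x/d*(X k - X 0)) ≤ B ^ k
  have key : ∀ k, k ≤ n → ∫ ω, Real.exp (x / d * (X k ω - X 0 ω)) ∂μ ≤ B ^ k := by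
    intro k
    induction k with
    | zero =>
      intro _
      simp [integral_const]
    | succ k ih =>
      intro hk
      have hkn : k ≤ n := le_trans (Nat.le_succ k) hk
      have ihk := ih hkn
      have hGsmℱ : StronglyMeasurable[ℱ k] (fun ω => Real.exp (x / d * (X k ω - X 0 ω))) := by
        have hsub : StronglyMeasurable[ℱ k] (fun ω => X k ω - X 0 ω) := by
          exact (hmart.stronglyAdapted k).sub ((hmart.stronglyAdapted 0).mono (ℱ.mono (Nat.zero_le k)))
        exact Real.continuous_exp.comp_stronglyMeasurable (hsub.const_mul (x / d))
      have hGint : Integrable (fun ω => Real.exp (x / d * (X k ω - X 0 ω))) μ := hPint k hkn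
      have hjk := hjump (k + 1) (Nat.succ_le_succ (Nat.zero_le k)) hk
      have hEmeas : AEStronglyMeasurable
          (fun ω => Real.exp (x / d * (X (k + 1) ω - X (k + 1 - 1) ω))) μ :=
        Real.continuous_exp.comp_aestronglyMeasurable
          (((hXm (k + 1)).sub (hXm (k + 1 - 1))).const_mul (x / d))
      have hEint : Integrable (fun ω => Real.exp (x / d * (X (k + 1) ω - X (k + 1 - 1) ω))) μ := by
        refine aux_int (C := Real.exp (x / d * d)) hEmeas ?_
        filter_upwards [hjk] with ω hω
        rw [abs_of_pos (Real.exp_pos _)]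
        exact Real.exp_le_exp.2 (mul_le_mul_of_nonneg_left (abs_le.1 hω).2 (by positivity))
      have hprod : (fun ω => Real.exp (x / d * (X (k + 1) ω - X 0 ω)))
          = fun ω => Real.exp (x / d * (X k ω - X 0 ω))
              * Real.exp (x / d * (X (k + 1) ω - X (k + 1 - 1) ω)) := by
        funext ω
        rw [← Real.exp_add]
        congr 1
        simp only [Nat.add_sub_cancel]
        ring
      have hGEint : Integrable (fun ω => Real.exp (x / d * (X k ω - X 0 ω))
          * Real.exp (x / d * (X (k + 1) ω - X (k + 1 - 1) ω))) μ := by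
        rw [← hprod]
        exact hPint (k + 1) hk
      have hpull : μ[fun ω => Real.exp (x / d * (X k ω - X 0 ω))
            * Real.exp (x / d * (X (k + 1) ω - X (k + 1 - 1) ω)) | ℱ k]
          =ᵐ[μ] fun ω => Real.exp (x / d * (X k ω - X 0 ω))
            * (μ[fun ω => Real.exp (x / d * (X (k + 1) ω - X (k + 1 - 1) ω)) | ℱ k]) ω := by
        exact condExp_mul_of_stronglyMeasurable_left hGsmℱ hGEint hEint
      have hcondk := hcond (k + 1) (Nat.succ_le_succ (Nat.zero_le k)) hk
      simp only [Nat.add_sub_cancel] at hcondk hpull hGEint hprod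
      calc ∫ ω, Real.exp (x / d * (X (k + 1) ω - X 0 ω)) ∂μ
          = ∫ ω, Real.exp (x / d * (X k ω - X 0 ω))
              * Real.exp (x / d * (X (k + 1) ω - X k ω)) ∂μ := by rw [hprod]
        _ = ∫ ω, (μ[fun ω => Real.exp (x / d * (X k ω - X 0 ω))
              * Real.exp (x / d * (X (k + 1) ω - X k ω)) | ℱ k]) ω ∂μ :=
            (integral_condExp (ℱ.le k)).symm
        _ = ∫ ω, Real.exp (x / d * (X k ω - X 0 ω))
              * (μ[fun ω => Real.exp (x / d * (X (k + 1) ω - X k ω)) | ℱ k]) ω ∂μ :=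
            integral_congr_ae hpull
        _ ≤ ∫ ω, Real.exp (x / d * (X k ω - X 0 ω)) * B ∂μ := by
            refine integral_mono_ae (integrable_condExp.congr hpull) (hGint.mul_const B) ?_
            filter_upwards [hcondk] with ω hω
            exact mul_le_mul_of_nonneg_left hω (Real.exp_pos _).le
        _ = (∫ ω, Real.exp (x / d * (X k ω - X 0 ω)) ∂μ) * B := integral_mul_const _ _
        _ ≤ B ^ k * B := mul_le_mul_of_nonneg_right ihk hB0
        _ = B ^ (k + 1) := (pow_succ B k).symm
  -- Chernoff step
  have hchern := mul_meas_ge_le_integral_of_nonneg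
    (μ := μ) (f := fun ω => Real.exp (x / d * (X n ω - X 0 ω)))
    (Filter.Eventually.of_forall fun ω => (Real.exp_pos _).le) (hPint n le_rfl)
    (Real.exp (x / d * (n * α)))
  have hsubset : {ω | (n : ℝ) * α ≤ X n ω - X 0 ω}
      ⊆ {ω | Real.exp (x / d * (n * α)) ≤ Real.exp (x / d * (X n ω - X 0 ω))} := by
    intro ω hω
    exact Real.exp_le_exp.2 (mul_le_mul_of_nonneg_left hω (by positivity))
  have hε : (0:ℝ) < Real.exp (x / d * (n * α)) := Real.exp_pos _
  have hmeasle : (μ {ω | (n : ℝ) * α ≤ X n ω - X 0 ω}).toReal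
      ≤ (μ {ω | Real.exp (x / d * (n * α))
          ≤ Real.exp (x / d * (X n ω - X 0 ω))}).toReal :=
    ENNReal.toReal_mono (measure_ne_top μ _) (measure_mono hsubset)
  have hfinal : (μ {ω | (n : ℝ) * α ≤ X n ω - X 0 ω}).toReal
      ≤ B ^ n / Real.exp (x / d * (n * α)) := by
    rw [le_div_iff₀ hε]
    calc (μ {ω | (n : ℝ) * α ≤ X n ω - X 0 ω}).toReal * Real.exp (x / d * (n * α))
        ≤ (μ {ω | Real.exp (x / d * (n * α))
            ≤ Real.exp (x / d * (X n ω - X 0 ω))}).toReal * Real.exp (x / d * (n * α)) :=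
          mul_le_mul_of_nonneg_right hmeasle hε.le
      _ ≤ B ^ n := by
          rw [mul_comm]
          exact hchern.trans (key n le_rfl)
  refine hfinal.trans (le_of_eq ?_)
  have hexp : Real.exp (-(α / d) * x) ^ n = (Real.exp (x / d * (n * α)))⁻¹ := by
    rw [← Real.exp_nat_mul, ← Real.exp_neg]
    congr 1
    ring
  rw [hBeq, mul_pow, hexp, div_eq_mul_inv, mul_comm]

/-- refined martingale concentration inequality using conditional moments
up to an even order `m`. -/
theorem stmt_13 {Ω : Type*} {m0 : MeasurableSpace Ω} {μ : Measure Ω} [IsProbabilityMeasure μ]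
    (ℱ : Filtration ℕ m0) (X : ℕ → Ω → ℝ) (hmart : Martingale X ℱ μ)
    (n : ℕ) (m : ℕ) (hm : 2 ≤ m) (hme : Even m)
    (d : ℝ) (hd : 0 < d) (μl : ℕ → ℝ) (hμl : ∀ l, 2 ≤ l → l ≤ m → 0 ≤ μl l)
    (hjump : ∀ k, 1 ≤ k → k ≤ n → ∀ᵐ ω ∂μ, |X k ω - X (k - 1) ω| ≤ d)
    (hmom : ∀ k, 1 ≤ k → k ≤ n → ∀ l, 2 ≤ l → l ≤ m →
      ∀ᵐ ω ∂μ, |(μ[fun ω => (X k ω - X (k - 1) ω) ^ l | ℱ (k - 1)]) ω| ≤ μl l)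
    (α : ℝ) (hα : 0 ≤ α) (x : ℝ) (hx : 0 ≤ x) :
    (μ {ω | (n : ℝ) * α ≤ |X n ω - X 0 ω|}).toReal ≤
      2 * (Real.exp (-(α / d) * x) *
        (1 + (∑ l ∈ Finset.Icc 2 (m - 1), (μl l / d ^ l - μl m / d ^ m) * x ^ l / l.factorial)
          + μl m / d ^ m * (Real.exp x - 1 - x))) ^ n := by
  have h1 := aux_onesided ℱ X hmart n m hm hme d hd μl hμl hjump hmom α hα x hx
  -- the negated process
  have hjump' : ∀ k, 1 ≤ k → k ≤ n → ∀ᵐ ω ∂μ, |(-X) k ω - (-X) (k - 1) ω| ≤ d := by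
    intro k hk1 hkn
    filter_upwards [hjump k hk1 hkn] with ω hω
    have : (-X) k ω - (-X) (k - 1) ω = -(X k ω - X (k - 1) ω) := by
      simp [Pi.neg_apply]; ring
    rw [this, abs_neg]
    exact hω
  have hmom' : ∀ k, 1 ≤ k → k ≤ n → ∀ l, 2 ≤ l → l ≤ m →
      ∀ᵐ ω ∂μ, |(μ[fun ω => ((-X) k ω - (-X) (k - 1) ω) ^ l | ℱ (k - 1)]) ω| ≤ μl l := by
    intro k hk1 hkn l h2 hlm
    have hbr : μ[fun ω => ((-X) k ω - (-X) (k - 1) ω) ^ l | ℱ (k - 1)]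
        =ᵐ[μ] μ[fun ω => ((-1 : ℝ) ^ l) * (X k ω - X (k - 1) ω) ^ l | ℱ (k - 1)] := by
      refine condExp_congr_ae (Filter.Eventually.of_forall fun ω => ?_)
      show ((-X) k ω - (-X) (k - 1) ω) ^ l = (-1 : ℝ) ^ l * (X k ω - X (k - 1) ω) ^ l
      have : (-X) k ω - (-X) (k - 1) ω = -(X k ω - X (k - 1) ω) := by
        simp [Pi.neg_apply]; ring
      rw [this, neg_pow]
    have hsmul : μ[fun ω => ((-1 : ℝ) ^ l) * (X k ω - X (k - 1) ω) ^ l | ℱ (k - 1)]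
        =ᵐ[μ] fun ω => ((-1 : ℝ) ^ l)
          * (μ[fun ω => (X k ω - X (k - 1) ω) ^ l | ℱ (k - 1)]) ω :=
      condExp_smul ((-1 : ℝ) ^ l) (fun ω => (X k ω - X (k - 1) ω) ^ l) _
    filter_upwards [hbr, hsmul, hmom k hk1 hkn l h2 hlm] with ω e1 e2 e3
    rw [e1, e2, abs_mul, abs_pow, abs_neg, abs_one, one_pow, one_mul]
    exact e3
  have h2 := aux_onesided ℱ (-X) hmart.neg n m hm hme d hd μl hμl hjump' hmom' α hα x hx
  have hset2 : {ω | (n : ℝ) * α ≤ (-X) n ω - (-X) 0 ω} = {ω | (n : ℝ) * α ≤ X 0 ω - X n ω} := by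
    ext ω
    simp only [Set.mem_setOf_eq, Pi.neg_apply]
    constructor <;> intro h <;> linarith
  rw [hset2] at h2
  have hsub : {ω | (n : ℝ) * α ≤ |X n ω - X 0 ω|}
      ⊆ {ω | (n : ℝ) * α ≤ X n ω - X 0 ω} ∪ {ω | (n : ℝ) * α ≤ X 0 ω - X n ω} := by
    intro ω hω
    have hω' : (n : ℝ) * α ≤ |X n ω - X 0 ω| := hω
    rcases le_abs.1 hω' with h | h
    · exact Or.inl h
    · exact Or.inr (by simpa [Set.mem_setOf_eq, neg_sub] using h)
  calc (μ {ω | (n : ℝ) * α ≤ |X n ω - X 0 ω|}).toReal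
      ≤ (μ ({ω | (n : ℝ) * α ≤ X n ω - X 0 ω} ∪ {ω | (n : ℝ) * α ≤ X 0 ω - X n ω})).toReal :=
        ENNReal.toReal_mono (measure_ne_top μ _) (measure_mono hsub)
    _ ≤ (μ {ω | (n : ℝ) * α ≤ X n ω - X 0 ω} + μ {ω | (n : ℝ) * α ≤ X 0 ω - X n ω}).toReal :=
        ENNReal.toReal_mono (by finiteness) (measure_union_le _ _)
    _ = (μ {ω | (n : ℝ) * α ≤ X n ω - X 0 ω}).toReal
        + (μ {ω | (n : ℝ) * α ≤ X 0 ω - X n ω}).toReal :=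
        ENNReal.toReal_add (measure_ne_top μ _) (measure_ne_top μ _)
    _ ≤ 2 * (Real.exp (-(α / d) * x) *
        (1 + (∑ l ∈ Finset.Icc 2 (m - 1), (μl l / d ^ l - μl m / d ^ m) * x ^ l / l.factorial)
          + μl m / d ^ m * (Real.exp x - 1 - x))) ^ n := by
      linarith
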